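/- For any integer Ψ with targeted value, any integer unsafe impact ξ⁻ < 0, any integer safe impact ξ⁺ > 0, and any decay parameters r_d ∈ (0,1) and Δ_d ≥ 1, there exist nonnegative integers x, r, y such that Ψ = ⌊x·ξ⁻ + y·ξ⁺·r_d^⌊r/Δ_d⌋⌋, constructed by choosing x as the smallest nonnegative integer with Ψ - x·ξ⁻ ≥ 0, r the smallest nonnegative integer with ξ⁺·r_d^⌊r/Δ_d⌋ ≤ 1, and y = ⌈(Ψ - x·ξ⁻)/(ξ⁺·r_d^⌊r/Δ_d⌋)⌉. -/
import Mathlib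


/-- Any integer pSS `Ψ` can be formed as `⌊x·ξ⁻ + y·ξ⁺·r_d^⌊r/Δ_d⌋⌋` with
`x` the smallest nonnegative integer making `Ψ - x·ξ⁻ ≥ 0`, `r` the smallest
nonnegative integer with `ξ⁺·r_d^⌊r/Δ_d⌋ ≤ 1`, and
`y = ⌈(Ψ - x·ξ⁻)/(ξ⁺·r_d^⌊r/Δ_d⌋)⌉`. -/
theorem pSS_event_combination_exists
    (Ψ ξm ξp : ℤ) (hξm : ξm < 0) (hξp : 0 < ξp)
    (r_d : ℝ) (hr₀ : 0 < r_d) (hr₁ : r_d < 1)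
    (Δd : ℕ) (hΔ : 1 ≤ Δd) :
    ∃ x r y : ℕ,
      (0 ≤ Ψ - (x : ℤ) * ξm ∧ ∀ x' : ℕ, x' < x → ¬ (0 ≤ Ψ - (x' : ℤ) * ξm)) ∧
      ((ξp : ℝ) * r_d ^ (r / Δd) ≤ 1 ∧
        ∀ r' : ℕ, r' < r → ¬ ((ξp : ℝ) * r_d ^ (r' / Δd) ≤ 1)) ∧
      (y : ℤ) = ⌈((Ψ - (x : ℤ) * ξm : ℤ) : ℝ) / ((ξp : ℝ) * r_d ^ (r / Δd))⌉ ∧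
      Ψ = ⌊(x : ℝ) * (ξm : ℝ) + (y : ℝ) * (ξp : ℝ) * r_d ^ (r / Δd)⌋ := by
  classical
  -- existence for x
  have hPx : ∃ x : ℕ, 0 ≤ Ψ - (x : ℤ) * ξm := by
    refine ⟨(-Ψ).toNat, ?_⟩
    have h1 : (-Ψ : ℤ) ≤ ((-Ψ).toNat : ℤ) := Int.self_le_toNat _
    have h2 : (0 : ℤ) ≤ ((-Ψ).toNat : ℤ) := Int.natCast_nonneg _
    nlinarith
  set x := Nat.find hPx with hxdef
  have hx1 : 0 ≤ Ψ - (x : ℤ) * ξm := Nat.find_spec hPx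
  have hx2 : ∀ x' : ℕ, x' < x → ¬ (0 ≤ Ψ - (x' : ℤ) * ξm) :=
    fun x' h => Nat.find_min hPx h
  -- existence for r
  have hξpR : (0 : ℝ) < (ξp : ℝ) := by exact_mod_cast hξp
  have hPr : ∃ r : ℕ, (ξp : ℝ) * r_d ^ (r / Δd) ≤ 1 := by
    obtain ⟨n, hn⟩ := exists_pow_lt_of_lt_one (show (0:ℝ) < 1 / (ξp:ℝ) by positivity) hr₁
    refine ⟨Δd * n, ?_⟩
    rw [Nat.mul_div_cancel_left n (by omega)]
    have h := (lt_div_iff₀ hξpR).mp hn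
    nlinarith
  set r := Nat.find hPr with hrdef
  have hr1 : (ξp : ℝ) * r_d ^ (r / Δd) ≤ 1 := Nat.find_spec hPr
  have hr2 : ∀ r' : ℕ, r' < r → ¬ ((ξp : ℝ) * r_d ^ (r' / Δd) ≤ 1) :=
    fun r' h => Nat.find_min hPr h
  -- define c and m
  set c : ℝ := (ξp : ℝ) * r_d ^ (r / Δd) with hcdef
  have hc0 : 0 < c := by positivity
  set m : ℤ := Ψ - (x : ℤ) * ξm with hmdef
  have hm0 : (0 : ℝ) ≤ (m : ℝ) := by exact_mod_cast hx1
  have hdiv0 : (0 : ℝ) ≤ (m : ℝ) / c := div_nonneg hm0 hc0.le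
  have hceil0 : (0 : ℤ) ≤ ⌈(m : ℝ) / c⌉ := Int.ceil_nonneg hdiv0
  refine ⟨x, r, (⌈(m : ℝ) / c⌉).toNat, ⟨hx1, hx2⟩, ⟨hr1, hr2⟩, ?_, ?_⟩
  · exact_mod_cast Int.toNat_of_nonneg hceil0
  · have hyval : ((⌈(m : ℝ) / c⌉).toNat : ℝ) = (⌈(m : ℝ) / c⌉ : ℤ) := by
      exact_mod_cast Int.toNat_of_nonneg hceil0
    have hyc1 : (m : ℝ) ≤ ((⌈(m : ℝ) / c⌉ : ℤ) : ℝ) * c := by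
      have := Int.le_ceil ((m : ℝ) / c)
      calc (m : ℝ) = (m : ℝ) / c * c := by field_simp
        _ ≤ ((⌈(m : ℝ) / c⌉ : ℤ) : ℝ) * c := mul_le_mul_of_nonneg_right this hc0.le
    have hyc2 : ((⌈(m : ℝ) / c⌉ : ℤ) : ℝ) * c < (m : ℝ) + 1 := by
      have h1 : ((⌈(m : ℝ) / c⌉ : ℤ) : ℝ) < (m : ℝ) / c + 1 := Int.ceil_lt_add_one _
      have h2 : ((⌈(m : ℝ) / c⌉ : ℤ) : ℝ) * c < ((m : ℝ) / c + 1) * c :=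
        mul_lt_mul_of_pos_right h1 hc0
      have h3 : ((m : ℝ) / c + 1) * c = (m : ℝ) + c := by field_simp
      have : ((⌈(m : ℝ) / c⌉ : ℤ) : ℝ) * c < (m : ℝ) + c := by linarith
      linarith [hr1.trans_eq (rfl : (1:ℝ) = 1)]
    have hfloor : ⌊((⌈(m : ℝ) / c⌉ : ℤ) : ℝ) * c⌋ = m := by
      rw [Int.floor_eq_iff]
      exact ⟨hyc1, by push_cast; linarith⟩
    have hexpr : (x : ℝ) * (ξm : ℝ) + ((⌈(m : ℝ) / c⌉).toNat : ℝ) * (ξp : ℝ) * r_d ^ (r / Δd)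
        = (((x : ℤ) * ξm : ℤ) : ℝ) + ((⌈(m : ℝ) / c⌉ : ℤ) : ℝ) * c := by
      rw [hyval, hcdef]; push_cast; ring
    rw [hexpr, Int.floor_intCast_add, hfloor]
    omega
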